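/- For 1 < q < ∞, 1 < r ≤ q, and any two Lebesgue-measurable positive functions u, v on a domain Ω, the following pointwise inequality holds for a.e. x, y ∈ Ω: [u(x)-u(y)]^{q-1} ( (u(x)^r - v(x)^r)/u(x)^{r-1} - (u(y)^r - v(y)^r)/u(y)^{r-1} ) + [v(x)-v(y)]^{q-1} ( (v(x)^r - u(x)^r)/v(x)^{r-1} - (v(y)^r - u(y)^r)/v(y)^{r-1} ) ≥ 0, where [t]^{q-1} := |t|^{q-2} t. -/

import Mathlib

set_option maxHeartbeats 1000000

open MeasureTheory

noncomputable section

/-- For `t ∈ ℝ`, `[t]^{q-1} := |t|^{q-2} t`. -/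
def sgnPow (q t : ℝ) : ℝ := |t| ^ (q - 2) * t

lemma sgnPow_neg (q t : ℝ) : sgnPow q (-t) = - sgnPow q t := by
  simp [sgnPow, abs_neg]

lemma sgnPow_zero (q : ℝ) : sgnPow q 0 = 0 := by simp [sgnPow]

lemma sgnPow_mul_self {q : ℝ} (hq : 1 < q) (t : ℝ) : sgnPow q t * t = |t| ^ q := by
  rcases eq_or_ne t 0 with rfl | ht
  · simp [sgnPow, Real.zero_rpow (by linarith : q ≠ 0)]
  · have hne : |t| ≠ 0 := abs_ne_zero.mpr ht
    have h1 : sgnPow q t * t = |t| ^ (q - 2) * |t| * |t| := by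
      rw [sgnPow]; rw [mul_assoc, ← abs_mul_abs_self t]; ring
    rw [h1, ← Real.rpow_add_one hne, ← Real.rpow_add_one hne]
    ring_nf

/-- Young's inequality in the form `r A^{r-1} B ≤ (r-1) A^r + B^r`. -/
lemma young_aux {r : ℝ} (hr : 1 < r) {A B : ℝ} (hA : 0 ≤ A) (hB : 0 ≤ B) :
    r * (A ^ (r - 1) * B) ≤ (r - 1) * A ^ r + B ^ r := by
  have hrpos : (0:ℝ) < r := by linarith
  have hr1 : (0:ℝ) ≤ r - 1 := by linarith
  have hw1 : (0:ℝ) ≤ (r-1)/r := by positivity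
  have hw2 : (0:ℝ) ≤ 1/r := by positivity
  have hp1 : (0:ℝ) ≤ A ^ r := by positivity
  have hp2 : (0:ℝ) ≤ B ^ r := by positivity
  have hw : (r-1)/r + 1/r = 1 := by field_simp; ring
  have h := Real.geom_mean_le_arith_mean2_weighted hw1 hw2 hp1 hp2 hw
  have e1 : (A ^ r) ^ ((r-1)/r) = A ^ (r-1) := by
    rw [← Real.rpow_mul hA]; congr 1; field_simp
  have e2 : (B ^ r) ^ ((1:ℝ)/r) = B ^ (1:ℝ) := by
    rw [← Real.rpow_mul hB]; congr 1; field_simp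
  rw [e1, e2] at h
  rw [Real.rpow_one] at h
  have h2 := mul_le_mul_of_nonneg_left h hrpos.le
  calc r * (A ^ (r-1) * B) = r * (A ^ (r-1) * B) := rfl
    _ ≤ r * ((r-1)/r * A ^ r + 1/r * B ^ r) := h2
    _ = (r - 1) * A ^ r + B ^ r := by field_simp

/-- Brasco–Franzina type discrete Picone lemma: for `0 < b < a`, `c, d > 0`,
`(a-b)^{r-1} (c^r/a^{r-1} - d^r/b^{r-1}) ≤ |c-d|^r`. -/
lemma picone_L {r : ℝ} (hr : 1 < r) {a b c d : ℝ} (hb : 0 < b) (hab : b < a)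
    (hc : 0 < c) (hd : 0 < d) :
    (a - b) ^ (r - 1) * (c ^ r / a ^ (r - 1) - d ^ r / b ^ (r - 1)) ≤ |c - d| ^ r := by
  have ha : 0 < a := hb.trans hab
  set t : ℝ := c / a with ht_def
  have ht : 0 < t := div_pos hc ha
  -- Young step 1 (tangent-plane inequality ingredient)
  have hG0 := young_aux hr ht.le (div_nonneg hd.le hb.le)
  have hG : r * (t ^ (r - 1) * d) ≤ ((r - 1) * t ^ r + (d / b) ^ r) * b := by
    have := mul_le_mul_of_nonneg_right hG0 hb.le
    calc r * (t ^ (r-1) * d) = r * (t ^ (r-1) * (d/b)) * b := by field_simp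
      _ ≤ ((r - 1) * t ^ r + (d / b) ^ r) * b := this
  -- rpow identities
  have har1 : a ^ (r - 1) = a ^ r / a := by
    rw [Real.rpow_sub ha, Real.rpow_one]
  have hbr1 : b ^ (r - 1) = b ^ r / b := by
    rw [Real.rpow_sub hb, Real.rpow_one]
  have htr : t ^ r = c ^ r / a ^ r := Real.div_rpow hc.le ha.le r
  have htr1 : t ^ (r - 1) = (c ^ r / a ^ r) / t := by
    rw [Real.rpow_sub ht, Real.rpow_one, htr]
  have hA : (0:ℝ) < a ^ r := Real.rpow_pos_of_pos ha r
  have hB : (0:ℝ) < b ^ r := Real.rpow_pos_of_pos hb r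
  have hC : (0:ℝ) < c ^ r := Real.rpow_pos_of_pos hc r
  have hD : (0:ℝ) < d ^ r := Real.rpow_pos_of_pos hd r
  have hdbr : (d / b) ^ r = d ^ r / b ^ r := Real.div_rpow hd.le hb.le r
  -- convexity (gradient) inequality
  have key : (1 - r) * t ^ r * (a - b) + r * (t ^ (r - 1)) * (c - d)
      - (c ^ r / a ^ (r - 1) - d ^ r / b ^ (r - 1))
      = (((r - 1) * t ^ r + (d / b) ^ r) * b) - r * (t ^ (r - 1) * d) := by
    rw [har1, hbr1, htr, htr1, hdbr, ht_def]
    field_simp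
    ring
  have hL' : c ^ r / a ^ (r - 1) - d ^ r / b ^ (r - 1)
      ≤ (1 - r) * t ^ r * (a - b) + r * (t ^ (r - 1)) * (c - d) := by linarith
  -- multiply by (a-b)^(r-1)
  have hab' : (0:ℝ) < a - b := by linarith
  set X : ℝ := t * (a - b) with hX_def
  have hX : 0 < X := mul_pos ht hab'
  have hXr : X ^ r = t ^ r * (a - b) ^ r := Real.mul_rpow ht.le hab'.le
  have hXr1 : X ^ (r - 1) = t ^ (r - 1) * (a - b) ^ (r - 1) := by
    rw [hX_def, Real.mul_rpow ht.le hab'.le]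
  have habr : (a - b) ^ (r - 1) * (a - b) = (a - b) ^ r := by
    rw [← Real.rpow_add_one (ne_of_gt hab')]
    ring_nf
  have step1 : (a - b) ^ (r - 1) * (c ^ r / a ^ (r - 1) - d ^ r / b ^ (r - 1))
      ≤ (1 - r) * X ^ r + r * X ^ (r - 1) * (c - d) := by
    have h1 := mul_le_mul_of_nonneg_left hL' (Real.rpow_nonneg hab'.le (r - 1))
    calc (a - b) ^ (r - 1) * (c ^ r / a ^ (r - 1) - d ^ r / b ^ (r - 1))
        ≤ (a - b) ^ (r - 1) * ((1 - r) * t ^ r * (a - b) + r * (t ^ (r - 1)) * (c - d)) := h1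
      _ = (1 - r) * (t ^ r * ((a - b) ^ (r - 1) * (a - b))) + r * X ^ (r - 1) * (c - d) := by
          rw [hXr1]; ring
      _ = (1 - r) * X ^ r + r * X ^ (r - 1) * (c - d) := by rw [habr, hXr]
  have step2 : r * X ^ (r - 1) * (c - d) ≤ r * (X ^ (r - 1) * |c - d|) := by
    have h1 : c - d ≤ |c - d| := le_abs_self _
    have h2 : (0:ℝ) ≤ r * X ^ (r - 1) := by positivity
    nlinarith [Real.rpow_nonneg hX.le (r - 1)]
  have step3 := young_aux hr hX.le (abs_nonneg (c - d))
  linarith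

/-- `[a-b]^{q-1} (c^r/a^{r-1} - d^r/b^{r-1}) ≤ |a-b|^{q-r} |c-d|^r`. -/
lemma picone_K {q r : ℝ} (hq : 1 < q) (hr : 1 < r) (hrq : r ≤ q) {a b c d : ℝ}
    (ha : 0 < a) (hb : 0 < b) (hc : 0 < c) (hd : 0 < d) :
    sgnPow q (a - b) * (c ^ r / a ^ (r - 1) - d ^ r / b ^ (r - 1))
      ≤ |a - b| ^ (q - r) * |c - d| ^ r := by
  have main : ∀ a b c d : ℝ, 0 < a → 0 < b → 0 < c → 0 < d → b < a →
      sgnPow q (a - b) * (c ^ r / a ^ (r - 1) - d ^ r / b ^ (r - 1))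
        ≤ |a - b| ^ (q - r) * |c - d| ^ r := by
    intro a b c d ha hb hc hd hab
    have hab' : (0:ℝ) < a - b := by linarith
    have habs : |a - b| = a - b := abs_of_pos hab'
    have hs : sgnPow q (a - b) = (a - b) ^ (q - r) * (a - b) ^ (r - 1) := by
      rw [sgnPow, habs, ← Real.rpow_add_one (ne_of_gt hab'), ← Real.rpow_add hab']
      ring_nf
    rw [hs, habs, mul_assoc]
    exact mul_le_mul_of_nonneg_left (picone_L hr hb hab hc hd)
      (Real.rpow_nonneg hab'.le _)
  rcases lt_trichotomy b a with h | h | h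
  · exact main a b c d ha hb hc hd h
  · have : a - b = 0 := by linarith
    rw [this, sgnPow_zero, zero_mul]
    positivity
  · have hmain := main b a d c hb ha hd hc h
    have e1 : sgnPow q (b - a) = - sgnPow q (a - b) := by
      rw [show b - a = -(a - b) by ring, sgnPow_neg]
    rw [e1] at hmain
    have e2 : |b - a| = |a - b| := abs_sub_comm b a
    have e3 : |d - c| = |c - d| := abs_sub_comm d c
    rw [e2, e3] at hmain
    nlinarith [hmain]

/-- Weighted AM–GM for two terms. -/
lemma amgm2 {q r : ℝ} (hq : 1 < q) (hr : 0 < r) (hrq : r ≤ q) {m n : ℝ}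
    (hm : 0 ≤ m) (hn : 0 ≤ n) :
    m ^ (q - r) * n ^ r ≤ (q - r)/q * m ^ q + r/q * n ^ q := by
  have hq0 : (0:ℝ) < q := by linarith
  have hw1 : (0:ℝ) ≤ (q - r)/q := by
    have : (0:ℝ) ≤ q - r := by linarith
    positivity
  have hw2 : (0:ℝ) ≤ r/q := by positivity
  have hw : (q - r)/q + r/q = 1 := by field_simp; ring
  have h := Real.geom_mean_le_arith_mean2_weighted hw1 hw2
    (Real.rpow_nonneg hm q) (Real.rpow_nonneg hn q) hw
  have e1 : (m ^ q) ^ ((q - r)/q) = m ^ (q - r) := by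
    rw [← Real.rpow_mul hm]; congr 1; field_simp
  have e2 : (n ^ q) ^ (r/q) = n ^ r := by
    rw [← Real.rpow_mul hn]; congr 1; field_simp
  rw [e1, e2] at h
  exact h

/-- Pointwise form of the discrete Picone inequality. -/
lemma picone_core {q r : ℝ} (hq : 1 < q) (hr : 1 < r) (hrq : r ≤ q) {a b c d : ℝ}
    (ha : 0 < a) (hb : 0 < b) (hc : 0 < c) (hd : 0 < d) :
    0 ≤ sgnPow q (a - b) * ((a ^ r - c ^ r) / a ^ (r - 1) - (b ^ r - d ^ r) / b ^ (r - 1)) +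
        sgnPow q (c - d) * ((c ^ r - a ^ r) / c ^ (r - 1) - (d ^ r - b ^ r) / d ^ (r - 1)) := by
  have self_div : ∀ x : ℝ, 0 < x → x ^ r / x ^ (r - 1) = x := by
    intro x hx
    rw [← Real.rpow_sub hx]
    norm_num
  have e1 : (a ^ r - c ^ r) / a ^ (r - 1) - (b ^ r - d ^ r) / b ^ (r - 1)
      = (a - b) - (c ^ r / a ^ (r - 1) - d ^ r / b ^ (r - 1)) := by
    rw [sub_div, sub_div, self_div a ha, self_div b hb]; ring
  have e2 : (c ^ r - a ^ r) / c ^ (r - 1) - (d ^ r - b ^ r) / d ^ (r - 1)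
      = (c - d) - (a ^ r / c ^ (r - 1) - b ^ r / d ^ (r - 1)) := by
    rw [sub_div, sub_div, self_div c hc, self_div d hd]; ring
  rw [e1, e2]
  have hS := sgnPow_mul_self hq (a - b)
  have hT := sgnPow_mul_self hq (c - d)
  have hK1 := picone_K hq hr hrq ha hb hc hd
  have hK2 := picone_K hq hr hrq hc hd ha hb
  have hr0 : (0:ℝ) < r := by linarith
  have hAM1 := amgm2 hq hr0 hrq (abs_nonneg (a - b)) (abs_nonneg (c - d))
  have hAM2 := amgm2 hq hr0 hrq (abs_nonneg (c - d)) (abs_nonneg (a - b))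
  have hq0 : q ≠ 0 := by positivity
  have expand : sgnPow q (a - b) * (a - b - (c ^ r / a ^ (r - 1) - d ^ r / b ^ (r - 1))) +
      sgnPow q (c - d) * (c - d - (a ^ r / c ^ (r - 1) - b ^ r / d ^ (r - 1)))
      = |a - b| ^ q + |c - d| ^ q
        - sgnPow q (a - b) * (c ^ r / a ^ (r - 1) - d ^ r / b ^ (r - 1))
        - sgnPow q (c - d) * (a ^ r / c ^ (r - 1) - b ^ r / d ^ (r - 1)) := by
    rw [← hS, ← hT]; ring
  have hXY : (q - r)/q * |a - b| ^ q + r/q * |c - d| ^ q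
      + ((q - r)/q * |c - d| ^ q + r/q * |a - b| ^ q)
      = |a - b| ^ q + |c - d| ^ q := by field_simp; ring
  rw [expand]
  linarith

/-- Discrete Picone-type inequality (Lemma `Lemma2` of the paper). -/
theorem discrete_picone {α : Type*} [MeasurableSpace α] (μ : Measure α) [SigmaFinite μ]
    (Ω : Set α) (q r : ℝ) (hq : 1 < q) (hr1 : 1 < r) (hrq : r ≤ q)
    (u v : α → ℝ) (hu : Measurable u) (hv : Measurable v)
    (hupos : ∀ x ∈ Ω, 0 < u x) (hvpos : ∀ x ∈ Ω, 0 < v x) :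
    ∀ᵐ z ∂((μ.restrict Ω).prod (μ.restrict Ω)),
      0 ≤ sgnPow q (u z.1 - u z.2) *
            ((u z.1 ^ r - v z.1 ^ r) / u z.1 ^ (r - 1) -
             (u z.2 ^ r - v z.2 ^ r) / u z.2 ^ (r - 1)) +
          sgnPow q (v z.1 - v z.2) *
            ((v z.1 ^ r - u z.1 ^ r) / v z.1 ^ (r - 1) -
             (v z.2 ^ r - u z.2 ^ r) / v z.2 ^ (r - 1)) := by
  set f : α × α → ℝ := fun z =>
      sgnPow q (u z.1 - u z.2) *
        ((u z.1 ^ r - v z.1 ^ r) / u z.1 ^ (r - 1) -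
         (u z.2 ^ r - v z.2 ^ r) / u z.2 ^ (r - 1)) +
      sgnPow q (v z.1 - v z.2) *
        ((v z.1 ^ r - u z.1 ^ r) / v z.1 ^ (r - 1) -
         (v z.2 ^ r - u z.2 ^ r) / v z.2 ^ (r - 1)) with hf
  have hu1 : Measurable fun z : α × α => u z.1 := hu.comp measurable_fst
  have hu2 : Measurable fun z : α × α => u z.2 := hu.comp measurable_snd
  have hv1 : Measurable fun z : α × α => v z.1 := hv.comp measurable_fst
  have hv2 : Measurable fun z : α × α => v z.2 := hv.comp measurable_snd
  have hsgn : ∀ g : α × α → ℝ, Measurable g → Measurable fun z => sgnPow q (g z) := by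
    intro g hg
    exact (hg.abs.pow measurable_const).mul hg
  have hmeas : Measurable f := by
    apply Measurable.add
    · exact (hsgn _ (hu1.sub hu2)).mul
        ((((hu1.pow measurable_const).sub (hv1.pow measurable_const)).div
            (hu1.pow measurable_const)).sub
         (((hu2.pow measurable_const).sub (hv2.pow measurable_const)).div
            (hu2.pow measurable_const)))
    · exact (hsgn _ (hv1.sub hv2)).mul
        ((((hv1.pow measurable_const).sub (hu1.pow measurable_const)).div
            (hv1.pow measurable_const)).sub
         (((hv2.pow measurable_const).sub (hu2.pow measurable_const)).div
            (hv2.pow measurable_const)))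
  have hset : MeasurableSet {z : α × α | ¬ 0 ≤ f z} := by
    have : {z : α × α | ¬ 0 ≤ f z} = {z : α × α | f z < 0} := by
      ext z; simp [not_le]
    rw [this]
    exact measurableSet_lt hmeas measurable_const
  rw [ae_iff, Measure.prod_restrict, Measure.restrict_apply hset]
  have hempty : {z : α × α | ¬ 0 ≤ f z} ∩ Ω ×ˢ Ω = ∅ := by
    rw [Set.eq_empty_iff_forall_notMem]
    rintro z ⟨hz, hz1, hz2⟩
    exact hz (picone_core hq hr1 hrq (hupos _ hz1) (hupos _ hz2) (hvpos _ hz1) (hvpos _ hz2))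
  rw [hempty, measure_empty]
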